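/- Let σ_r(α) = −s_{β_r}(α), where s_{β_r} is the Weyl reflection in the cascade root β_r. Then σ_r preserves the layer Δ⁺_r, and for every α ∈ Δ⁺_r one has α + σ_r(α) = β_r. Moreover if α, α' ∈ Δ⁺_r and α + α' is a restricted root, then α + α' = β_r. -/

import Mathlib

open scoped RealInnerProductSpace

/-- Let `σ_r(α) = -s_{β_r}(α)` where `s_{β_r}` is the Weyl
reflection in the cascade root `β_r`.  Then `σ_r` preserves the layer `Δ⁺_r`,
`α + σ_r(α) = β_r` for all `α ∈ Δ⁺_r`, and if `α, α' ∈ Δ⁺_r` with `α + α'` a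
restricted root then `α + α' = β_r`. -/
theorem stepwise_sq_int_stmt8
    {V : Type*} [NormedAddCommGroup V] [InnerProductSpace ℝ V]
    (Δ Δpos : Set V) (hfin : Δ.Finite)
    (h0 : (0 : V) ∉ Δ)
    (hrefl : ∀ α ∈ Δ, ∀ γ ∈ Δ, γ - (2 * ⟪γ, α⟫ / ⟪α, α⟫) • α ∈ Δ)
    (hint : ∀ α ∈ Δ, ∀ γ ∈ Δ, ∃ k : ℤ, 2 * ⟪γ, α⟫ / ⟪α, α⟫ = (k : ℝ))
    (hsub : Δpos ⊆ Δ)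
    (hpos : ∀ α ∈ Δ, (α ∈ Δpos ↔ -α ∉ Δpos))
    (hclosed : ∀ α ∈ Δpos, ∀ γ ∈ Δpos, α + γ ∈ Δ → α + γ ∈ Δpos)
    {m : ℕ} (β : Fin m → V)
    (hβpos : ∀ r, β r ∈ Δpos)
    (horth : ∀ r i : Fin m, i < r → ⟪β r, β i⟫ = 0)
    (hmax : ∀ r : Fin m, ∀ α ∈ Δpos, (∀ i : Fin m, i < r → ⟪α, β i⟫ = 0) →
      α - β r ∈ AddSubmonoid.closure Δpos → α = β r)
    (hcomplete : ∀ α ∈ Δpos, ∃ i : Fin m, ⟪α, β i⟫ ≠ 0)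
    (layer : Fin m → Set V)
    (hlayer : ∀ r : Fin m, layer r
      = {α ∈ Δpos | (∀ i : Fin m, i < r → α ∉ layer i) ∧ β r - α ∈ Δpos}) :
    ∀ r : Fin m,
      (∀ α ∈ layer r, -(α - (2 * ⟪α, β r⟫ / ⟪β r, β r⟫) • β r) ∈ layer r) ∧
      (∀ α ∈ layer r, α + -(α - (2 * ⟪α, β r⟫ / ⟪β r, β r⟫) • β r) = β r) ∧
      (∀ α ∈ layer r, ∀ α' ∈ layer r, α + α' ∈ Δ → α + α' = β r) := by
  -- basic facts
  have hip : ∀ δ ∈ Δ, (0:ℝ) < ⟪δ, δ⟫ := by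
    intro δ hδ
    have hδ0 : δ ≠ 0 := fun h => h0 (h ▸ hδ)
    have h1 : ⟪δ, δ⟫ ≠ 0 := fun h => hδ0 ((inner_self_eq_zero (𝕜 := ℝ)).mp h)
    exact lt_of_le_of_ne real_inner_self_nonneg (Ne.symm h1)
  have hip' : ∀ δ ∈ Δ, ⟪δ, δ⟫ ≠ 0 := fun δ hδ => (hip δ hδ).ne'
  have h0p : (0 : V) ∉ Δpos := fun h => h0 (hsub h)
  have hneg : ∀ δ ∈ Δ, -δ ∈ Δ := by
    intro δ hδ
    have h := hrefl δ hδ δ hδ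
    rw [show 2 * ⟪δ, δ⟫ / ⟪δ, δ⟫ = (2:ℝ) from by
      rw [mul_div_assoc, div_self (hip' δ hδ), mul_one]] at h
    have : δ - (2:ℝ) • δ = -δ := by module
    rwa [this] at h
  -- integrality, cleared of denominators
  have hk : ∀ b ∈ Δ, ∀ x ∈ Δ, ∃ z : ℤ, 2 * ⟪x, b⟫ = (z : ℝ) * ⟪b, b⟫ := by
    intro b hb x hx
    obtain ⟨z, hz⟩ := hint b hb x hx
    rw [div_eq_iff (hip' b hb)] at hz
    exact ⟨z, hz⟩
  -- reflection with integer coefficient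
  have hrefl' : ∀ b ∈ Δ, ∀ x ∈ Δ, ∀ z : ℤ, 2 * ⟪x, b⟫ = (z : ℝ) * ⟪b, b⟫ →
      x - (z : ℝ) • b ∈ Δ := by
    intro b hb x hx z hz
    have h := hrefl b hb x hx
    rw [show 2 * ⟪x, b⟫ / ⟪b, b⟫ = (z:ℝ) from by rw [hz, mul_div_assoc, div_self (hip' b hb), mul_one]] at h
    exact h
  -- hmax helpers
  have HM : ∀ r : Fin m, ∀ δ ∈ Δpos, (∀ j, j < r → ⟪δ, β j⟫ = 0) → δ + β r ∈ Δ → False := by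
    intro r δ hδ ho hs
    have hp : δ + β r ∈ Δpos := hclosed δ hδ (β r) (hβpos r) hs
    have := hmax r (δ + β r) hp
      (fun i hi => by rw [inner_add_left, ho i hi, horth r i hi, add_zero])
      (by rw [add_sub_cancel_right]; exact AddSubmonoid.subset_closure hδ)
    apply h0p
    have hδ0 : δ = 0 := by
      have := this
      rwa [add_eq_right] at this
    rwa [hδ0] at hδ
  have HM2 : ∀ r : Fin m, ∀ δ ∈ Δpos, (∀ j, j < r → ⟪δ, β j⟫ = 0) →
      δ - β r ∈ Δpos → δ = β r := by
    intro r δ hδ ho hs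
    exact hmax r δ hδ ho (AddSubmonoid.subset_closure hs)
  -- negative inner product is impossible
  have NK : ∀ r : Fin m, ∀ δ ∈ Δpos, (∀ j, j < r → ⟪δ, β j⟫ = 0) →
      ⟪δ, β r⟫ < 0 → False := by
    intro r δ hδ ho hneg'
    have hδΔ : δ ∈ Δ := hsub hδ
    have hbΔ : β r ∈ Δ := hsub (hβpos r)
    have hbb := hip _ hbΔ
    have hdd := hip _ hδΔ
    obtain ⟨k, hkk⟩ := hk (β r) hbΔ δ hδΔ
    obtain ⟨e, hee⟩ := hk δ hδΔ (β r) hbΔ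
    have hcomm : ⟪β r, δ⟫ = ⟪δ, β r⟫ := real_inner_comm _ _
    have hkneg : k ≤ -1 := by
      have : (k:ℝ) < 0 := by
        by_contra hc
        push_neg at hc
        nlinarith
      have : k < 0 := by exact_mod_cast this
      omega
    have heneg : e ≤ -1 := by
      have : (e:ℝ) < 0 := by
        by_contra hc
        push_neg at hc
        nlinarith
      have : e < 0 := by exact_mod_cast this
      omega
    by_cases hk1 : k = -1
    · -- δ + β r ∈ Δ
      have h := hrefl' (β r) hbΔ δ hδΔ k hkk
      rw [hk1] at h
      have : δ - ((-1 : ℤ):ℝ) • β r = δ + β r := by push_cast; module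
      rw [this] at h
      exact HM r δ hδ ho h
    by_cases he1 : e = -1
    · have h := hrefl' δ hδΔ (β r) hbΔ e hee
      rw [he1] at h
      have : β r - ((-1 : ℤ):ℝ) • δ = δ + β r := by push_cast; module
      rw [this] at h
      exact HM r δ hδ ho h
    -- k ≤ -2, e ≤ -2
    have hk2 : k ≤ -2 := by omega
    have he2 : e ≤ -2 := by omega
    have hCS : ⟪δ, β r⟫ * ⟪δ, β r⟫ ≤ ⟪δ, δ⟫ * ⟪β r, β r⟫ := real_inner_mul_inner_self_le _ _
    have hprod : (k:ℝ) * e ≤ 4 := by nlinarith [mul_pos hbb hdd]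
    have hprodZ : k * e ≤ 4 := by exact_mod_cast hprod
    have hk2' : k = -2 := by nlinarith
    have he2' : e = -2 := by nlinarith
    rw [hk2'] at hkk
    rw [he2'] at hee
    have h1 : ⟪δ, β r⟫ = -⟪β r, β r⟫ := by push_cast at hkk; linarith
    have h2 : ⟪δ, β r⟫ = -⟪δ, δ⟫ := by push_cast at hee; linarith
    have hz : ⟪δ + β r, δ + β r⟫ = 0 := by
      rw [real_inner_add_add_self]; linarith
    have hδb : δ = -(β r) := by
      have := inner_self_eq_zero (𝕜 := ℝ).mp hz
      have : δ + β r = 0 := this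
      linear_combination (norm := module) this
    have := (hpos (β r) hbΔ).mp (hβpos r)
    rw [← hδb] at this
    exact this hδ
  -- positive inner product in layer, part 1: positivity
  have CL0 : ∀ r : Fin m, ∀ δ ∈ Δpos, (∀ j, j < r → ⟪δ, β j⟫ = 0) →
      β r - δ ∈ Δpos → 0 < ⟪δ, β r⟫ := by
    intro r δ hδ ho hγ
    rcases lt_trichotomy (⟪δ, β r⟫ : ℝ) 0 with h | h | h
    · exact absurd (NK r δ hδ ho h) not_false
    · exfalso
      have hbΔ : β r ∈ Δ := hsub (hβpos r)
      have hγΔ : β r - δ ∈ Δ := hsub hγ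
      have h2 : 2 * ⟪β r - δ, β r⟫ = ((2:ℤ):ℝ) * ⟪β r, β r⟫ := by
        rw [inner_sub_left, h]; push_cast; ring
      have hr := hrefl' (β r) hbΔ (β r - δ) hγΔ 2 h2
      have heq : β r - δ - ((2:ℤ):ℝ) • β r = -(δ + β r) := by push_cast; module
      rw [heq] at hr
      exact HM r δ hδ ho (by simpa using hneg _ hr)
    · exact h
  -- coefficient is exactly 1
  have CL : ∀ r : Fin m, ∀ δ ∈ Δpos, (∀ j, j < r → ⟪δ, β j⟫ = 0) →
      β r - δ ∈ Δpos → 2 * ⟪δ, β r⟫ = ⟪β r, β r⟫ := by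
    intro r δ hδ ho hγ
    have hδΔ : δ ∈ Δ := hsub hδ
    have hbΔ : β r ∈ Δ := hsub (hβpos r)
    have hγΔ : β r - δ ∈ Δ := hsub hγ
    have hbb := hip _ hbΔ
    have hγo : ∀ j, j < r → ⟪β r - δ, β j⟫ = 0 := fun j hj => by
      rw [inner_sub_left, ho j hj, horth r j hj, sub_zero]
    have h1 := CL0 r δ hδ ho hγ
    have h2 := CL0 r (β r - δ) hγ hγo (by rwa [sub_sub_cancel])
    obtain ⟨k, hkk⟩ := hk (β r) hbΔ δ hδΔ
    obtain ⟨k', hkk'⟩ := hk (β r) hbΔ (β r - δ) hγΔ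
    have hk1 : 1 ≤ k := by
      have : (0:ℝ) < k := by nlinarith
      have : 0 < k := by exact_mod_cast this
      omega
    have hk1' : 1 ≤ k' := by
      have : (0:ℝ) < k' := by nlinarith
      have : 0 < k' := by exact_mod_cast this
      omega
    have hsum : ((k:ℝ) + k') * ⟪β r, β r⟫ = 2 * ⟪β r, β r⟫ := by
      rw [inner_sub_left] at hkk'
      ring_nf
      ring_nf at hkk hkk'
      linarith
    have : (k:ℝ) + k' = 2 := by
      have := mul_right_cancel₀ (hip' _ hbΔ) hsum
      exact this
    have hkk2 : k + k' = 2 := by exact_mod_cast this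
    have : k = 1 := by omega
    rw [this] at hkk
    push_cast at hkk
    linarith
  -- an element orthogonal to β j (j < r) is in no earlier layer
  have NotE : ∀ r : Fin m, ∀ δ, (∀ j, j < r → ⟪δ, β j⟫ = 0) →
      ∀ j, j < r → δ ∉ layer j := by
    intro r δ ho j hj hmem
    rw [hlayer j] at hmem
    obtain ⟨hδp, -, hs⟩ := hmem
    have h1 := CL j δ hδp (fun i hi => ho i (hi.trans hj)) hs
    have h2 := ho j hj
    have h3 := hip _ (hsub (hβpos j))
    rw [h2] at h1
    linarith
  -- characterization: positive and positively paired with β r ⇒ β r or in layer r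
  have Cc : ∀ r : Fin m, ∀ δ ∈ Δpos, (∀ j, j < r → ⟪δ, β j⟫ = 0) →
      0 < ⟪δ, β r⟫ → δ = β r ∨ δ ∈ layer r := by
    intro r δ hδ ho hp'
    have hδΔ : δ ∈ Δ := hsub hδ
    have hbΔ : β r ∈ Δ := hsub (hβpos r)
    have hbb := hip _ hbΔ
    have hdd := hip _ hδΔ
    have hcomm : ⟪β r, δ⟫ = ⟪δ, β r⟫ := real_inner_comm _ _
    obtain ⟨k, hkk⟩ := hk (β r) hbΔ δ hδΔ
    obtain ⟨e, hee⟩ := hk δ hδΔ (β r) hbΔ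
    have hk1 : 1 ≤ k := by
      have : (0:ℝ) < k := by nlinarith
      have : 0 < k := by exact_mod_cast this
      omega
    have he1 : 1 ≤ e := by
      have : (0:ℝ) < e := by nlinarith
      have : 0 < e := by exact_mod_cast this
      omega
    have dich : β r - δ ∈ Δ → (δ = β r ∨ δ ∈ layer r) := by
      intro hβδ
      by_cases hc : β r - δ ∈ Δpos
      · right
        rw [hlayer r]
        exact ⟨hδ, NotE r δ ho, hc⟩
      · left
        have hB : δ - β r ∈ Δpos := by
          by_contra hB
          exact hc ((hpos _ hβδ).mpr (by rwa [neg_sub]))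
        exact HM2 r δ hδ ho hB
    by_cases hke : k = 1
    · apply dich
      have h := hrefl' (β r) hbΔ δ hδΔ k hkk
      rw [hke] at h
      have heq : δ - ((1:ℤ):ℝ) • β r = -(β r - δ) := by push_cast; module
      rw [heq] at h
      simpa using hneg _ h
    by_cases hee1 : e = 1
    · apply dich
      have h := hrefl' δ hδΔ (β r) hbΔ e hee
      rw [hee1] at h
      have heq : β r - ((1:ℤ):ℝ) • δ = β r - δ := by push_cast; module
      rwa [heq] at h
    -- k ≥ 2 and e ≥ 2 ⇒ δ = β r
    have hk2 : 2 ≤ k := by omega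
    have he2 : 2 ≤ e := by omega
    have hCS : ⟪δ, β r⟫ * ⟪δ, β r⟫ ≤ ⟪δ, δ⟫ * ⟪β r, β r⟫ := real_inner_mul_inner_self_le _ _
    have hprod : (k:ℝ) * e ≤ 4 := by nlinarith [mul_pos hbb hdd]
    have hprodZ : k * e ≤ 4 := by exact_mod_cast hprod
    have hk2' : k = 2 := by nlinarith
    have he2' : e = 2 := by nlinarith
    rw [hk2'] at hkk
    rw [he2'] at hee
    have h1 : ⟪δ, β r⟫ = ⟪β r, β r⟫ := by push_cast at hkk; linarith
    have h2 : ⟪δ, β r⟫ = ⟪δ, δ⟫ := by push_cast at hee; linarith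
    left
    have hz : ⟪δ - β r, δ - β r⟫ = 0 := by
      rw [real_inner_sub_sub_self]; linarith
    have := (inner_self_eq_zero (𝕜 := ℝ)).mp hz
    have : δ - β r = 0 := this
    linear_combination (norm := module) this
  -- orthogonality of layer elements to earlier cascade roots
  have O0 : ∀ n : ℕ, ∀ j r : Fin m, j.val = n → ∀ δ ∈ layer r, j < r → ⟪δ, β j⟫ = 0 := by
    intro n
    induction n using Nat.strong_induction_on with
    | _ n IH =>
      intro j r hjn δ hδ hjr
      have hδ' := hδ
      rw [hlayer r] at hδ'
      obtain ⟨hδp, hnl, hsp⟩ := hδ'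
      have ho : ∀ i, i < j → ⟪δ, β i⟫ = 0 := fun i hi =>
        IH i.val (by omega) i r rfl δ hδ (hi.trans hjr)
      by_contra hne'
      rcases lt_trichotomy (⟪δ, β j⟫ : ℝ) 0 with h | h | h
      · exact NK j δ hδp ho h
      · exact hne' h
      · rcases Cc j δ hδp ho h with heq | hmem
        · have hβrj : β r = β j := HM2 j (β r) (hβpos r)
            (fun i hi => horth r i (hi.trans hjr)) (by rw [← heq]; exact hsp)
          apply h0p
          have : β r - δ = 0 := by rw [hβrj, heq, sub_self]
          rwa [this] at hsp
        · exact hnl j hjr hmem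
  have O : ∀ r : Fin m, ∀ δ ∈ layer r, ∀ j, j < r → ⟪δ, β j⟫ = 0 :=
    fun r δ hδ j hj => O0 j.val j r rfl δ hδ hj
  -- final assembly
  intro r
  have hbΔ : β r ∈ Δ := hsub (hβpos r)
  have hbb' : ⟪β r, β r⟫ ≠ 0 := hip' _ hbΔ
  have key : ∀ α ∈ layer r, 2 * ⟪α, β r⟫ / ⟪β r, β r⟫ = 1 := by
    intro α hα
    have hα' := hα
    rw [hlayer r] at hα'
    obtain ⟨hαp, -, hsp⟩ := hα'
    have := CL r α hαp (O r α hα) hsp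
    rw [this, div_self hbb']
  have keymem : ∀ α ∈ layer r, β r - α ∈ layer r := by
    intro α hα
    have hα' := hα
    rw [hlayer r] at hα'
    obtain ⟨hαp, -, hsp⟩ := hα'
    rw [hlayer r]
    refine ⟨hsp, ?_, by rwa [sub_sub_cancel]⟩
    exact NotE r (β r - α) (fun j hj => by
      rw [inner_sub_left, O r α hα j hj, horth r j hj, sub_zero])
  refine ⟨?_, ?_, ?_⟩
  · intro α hα
    rw [key α hα, one_smul, neg_sub]
    exact keymem α hα
  · intro α hα
    rw [key α hα, one_smul, neg_sub]
    abel
  · intro α hα α' hα' hΔs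
    have hαmem := hα; rw [hlayer r] at hαmem
    obtain ⟨hαp, -, hαs⟩ := hαmem
    have hα'mem := hα'; rw [hlayer r] at hα'mem
    obtain ⟨hα'p, -, hα's⟩ := hα'mem
    have hδp : α + α' ∈ Δpos := hclosed α hαp α' hα'p hΔs
    have hδΔ : α + α' ∈ Δ := hΔs
    have hbb := hip _ hbΔ
    have hdd := hip _ hδΔ
    have hc1 : 2 * ⟪α, β r⟫ = ⟪β r, β r⟫ := CL r α hαp (O r α hα) hαs
    have hc2 : 2 * ⟪α', β r⟫ = ⟪β r, β r⟫ := CL r α' hα'p (O r α' hα') hα's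
    have hib : ⟪α + α', β r⟫ = ⟪β r, β r⟫ := by
      rw [inner_add_left]; linarith
    have ho : ∀ j, j < r → ⟪α + α', β j⟫ = 0 := fun j hj => by
      rw [inner_add_left, O r α hα j hj, O r α' hα' j hj, add_zero]
    have hcomm : ⟪β r, α + α'⟫ = ⟪α + α', β r⟫ := real_inner_comm _ _
    obtain ⟨e, hee⟩ := hk (α + α') hδΔ (β r) hbΔ
    have he1 : 1 ≤ e := by
      have : (0:ℝ) < e := by nlinarith
      have : 0 < e := by exact_mod_cast this
      omega
    have hCS : ⟪α + α', β r⟫ * ⟪α + α', β r⟫ ≤ ⟪α + α', α + α'⟫ * ⟪β r, β r⟫ :=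
      real_inner_mul_inner_self_le _ _
    have he2 : e ≤ 2 := by
      by_contra hc
      push_neg at hc
      have : (3:ℝ) ≤ e := by exact_mod_cast hc
      nlinarith
    interval_cases e
    · -- e = 1 : β r - (α + α') ∈ Δ
      have h := hrefl' (α + α') hδΔ (β r) hbΔ 1 hee
      have heq : β r - ((1:ℤ):ℝ) • (α + α') = β r - (α + α') := by push_cast; module
      rw [heq] at h
      by_cases hc : β r - (α + α') ∈ Δpos
      · exfalso
        have := CL r (α + α') hδp ho hc
        rw [hib] at this
        linarith
      · have hB : (α + α') - β r ∈ Δpos := by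
          by_contra hB
          exact hc ((hpos _ h).mpr (by rwa [neg_sub]))
        exact HM2 r (α + α') hδp ho hB
    · -- e = 2 : ⟪δ,δ⟫ = ⟪β r, β r⟫, δ = β r
      have h2 : ⟪α + α', α + α'⟫ = ⟪β r, β r⟫ := by
        push_cast at hee
        rw [hcomm, hib] at hee
        linarith
      have hz : ⟪(α + α') - β r, (α + α') - β r⟫ = 0 := by
        rw [real_inner_sub_sub_self]
        rw [hib, h2]
        ring
      have := (inner_self_eq_zero (𝕜 := ℝ)).mp hz
      have h3 : (α + α') - β r = 0 := this
      linear_combination (norm := module) h3
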